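/- Let W ⊆ U_1 × ⋯ × U_k be a multilinear variety of codimension at most r, where U_1, …, U_k are finite-dimensional F_p-vector spaces. Then |W| ≥ p^{−r} · |U_1 × ⋯ × U_k|. -/

import Mathlib

open scoped BigOperators

/-- `f` is a multilinear form in the variables indexed by `J` (and does not depend on the
remaining variables). -/
def IsMultilinearIn (p : ℕ) {k : ℕ} {U : Fin k → Type*} [∀ i, AddCommMonoid (U i)]
    [∀ i, Module (ZMod p) (U i)] (J : Finset (Fin k)) (f : (∀ i, U i) → ZMod p) : Prop :=
  (∀ x y : ∀ i, U i, (∀ i ∈ J, x i = y i) → f x = f y) ∧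
  ∀ i ∈ J,
    (∀ (x : ∀ i, U i) (a b : U i),
        f (Function.update x i (a + b)) = f (Function.update x i a) + f (Function.update x i b)) ∧
    (∀ (x : ∀ i, U i) (c : ZMod p) (a : U i),
        f (Function.update x i (c • a)) = c * f (Function.update x i a))

/-- `W` is a multilinear variety of codimension at most `r`: the common zero set of at most
`r` forms, each multilinear in the variables indexed by some nonempty subset of `[k]`. -/
def IsMLVariety (p : ℕ) {k : ℕ} {U : Fin k → Type*} [∀ i, AddCommMonoid (U i)]
    [∀ i, Module (ZMod p) (U i)] (r : ℕ) (W : Set (∀ i, U i)) : Prop :=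
  ∃ (J : Fin r → Finset (Fin k)) (f : Fin r → (∀ i, U i) → ZMod p),
    (∀ j, (J j).Nonempty ∧ IsMultilinearIn p (J j) (f j)) ∧
    W = {x | ∀ j, f j x = 0}


open Finset in
private lemma variety_aux (p : ℕ) [Fact p.Prime] {k r : ℕ} {U : Fin k → Type}
    [∀ i, AddCommGroup (U i)] [∀ i, Module (ZMod p) (U i)] [∀ i, Fintype (U i)]
    (J : Fin r → Finset (Fin k)) (f : Fin r → ((∀ i, U i) → ZMod p))
    (s : Finset (Fin k)) :
    ∀ T : Finset (Fin r),
      (∀ j ∈ T, (J j).Nonempty ∧ J j ⊆ s ∧ IsMultilinearIn p (J j) (f j)) →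
      (p : ℝ)⁻¹ ^ T.card * (Fintype.card (∀ i, U i) : ℝ) ≤
        (((Finset.univ : Finset (∀ i, U i)).filter fun x => ∀ j ∈ T, f j x = 0).card : ℝ) := by
  classical
  have hp : (0:ℝ) < p := by exact_mod_cast (Fact.out : p.Prime).pos
  induction s using Finset.induction with
  | empty =>
    intro T hT
    obtain rfl : T = ∅ := by
      by_contra hne
      obtain ⟨j, hj⟩ := Finset.nonempty_iff_ne_empty.2 hne
      obtain ⟨⟨i, hi⟩, hsub, -⟩ := hT j hj
      exact absurd (hsub hi) (by simp)
    simp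
  | insert a s ha IH =>
    intro T hT
    set TR := T.filter (fun j => a ∈ J j) with hTRdef
    set TS := T.filter (fun j => a ∉ J j) with hTSdef
    have hcardsplit : TR.card + TS.card = T.card := Finset.card_filter_add_card_filter_not _
    have hTS : ∀ j ∈ TS, (J j).Nonempty ∧ J j ⊆ s ∧ IsMultilinearIn p (J j) (f j) := by
      intro j hj
      rw [hTSdef, Finset.mem_filter] at hj
      obtain ⟨h1, h2, h3⟩ := hT j hj.1
      refine ⟨h1, fun i hi => ?_, h3⟩
      rcases Finset.mem_insert.1 (h2 hi) with h | h
      · exact absurd (h ▸ hi) hj.2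
      · exact h
    have IH' := IH TS hTS
    -- counting function
    set N : (∀ i, U i) → ℕ := fun x =>
      (Finset.univ.filter fun v : U a => ∀ j ∈ T, f j (Function.update x a v) = 0).card with hN
    -- key identity
    have key : ∑ x : ∀ i, U i, N x =
        Fintype.card (U a) *
          ((Finset.univ.filter fun x : ∀ i, U i => ∀ j ∈ T, f j x = 0).card) := by
      calc ∑ x : ∀ i, U i, N x
          = ∑ x : ∀ i, U i, ∑ v : U a,
              (if (∀ j ∈ T, f j (Function.update x a v) = 0) then 1 else 0) := by
            simp only [hN, Finset.card_filter]
        _ = ∑ q : (∀ i, U i) × U a,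
              (if (∀ j ∈ T, f j (Function.update q.1 a q.2) = 0) then 1 else 0) := by
            rw [Fintype.sum_prod_type]
        _ = ∑ q : (∀ i, U i) × U a, (if (∀ j ∈ T, f j q.1 = 0) then 1 else 0) :=
            Fintype.sum_equiv
              ⟨fun q => (Function.update q.1 a q.2, q.1 a),
               fun q => (Function.update q.1 a q.2, q.1 a),
               fun q => by simp [Function.update_idem],
               fun q => by simp [Function.update_idem]⟩ _ _ (fun q => rfl)
        _ = ∑ x : ∀ i, U i, ∑ _v : U a, (if (∀ j ∈ T, f j x = 0) then 1 else 0) := by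
            rw [Fintype.sum_prod_type]
        _ = Fintype.card (U a) *
              ((Finset.univ.filter fun x : ∀ i, U i => ∀ j ∈ T, f j x = 0).card) := by
            simp only [Finset.sum_const, Finset.card_univ, smul_eq_mul, Finset.card_filter,
              Finset.mul_sum]
    -- lower bound for N x on the variety of TS
    have hB : ∀ x : ∀ i, U i, (∀ j ∈ TS, f j x = 0) →
        (p:ℝ)⁻¹ ^ TR.card * (Fintype.card (U a) : ℝ) ≤ (N x : ℝ) := by
      intro x hx
      have hcond : ∀ v : U a,
          (∀ j ∈ T, f j (Function.update x a v) = 0) ↔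
          (∀ j ∈ TR, f j (Function.update x a v) = 0) := by
        intro v
        constructor
        · intro h j hj; exact h j (Finset.mem_filter.1 hj).1
        · intro h j hj
          by_cases haj : a ∈ J j
          · exact h j (Finset.mem_filter.2 ⟨hj, haj⟩)
          · have indep := (hT j hj).2.2.1
            have heq : f j (Function.update x a v) = f j x :=
              indep _ _ (fun i hi => Function.update_of_ne (by rintro rfl; exact haj hi) _ _)
            rw [heq]
            exact hx j (Finset.mem_filter.2 ⟨hj, haj⟩)
      set φ : U a →ₗ[ZMod p] (TR → ZMod p) :=
        { toFun := fun v j => f j.1 (Function.update x a v)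
          map_add' := by
            intro v w; funext j
            exact ((hT j.1 (Finset.mem_filter.1 j.2).1).2.2.2 a (Finset.mem_filter.1 j.2).2).1 x v w
          map_smul' := by
            intro c v; funext j
            exact ((hT j.1 (Finset.mem_filter.1 j.2).1).2.2.2 a (Finset.mem_filter.1 j.2).2).2 x c v }
        with hφ
      have hmem : ∀ v : U a,
          (∀ j ∈ TR, f j (Function.update x a v) = 0) ↔ v ∈ LinearMap.ker φ := by
        intro v
        rw [LinearMap.mem_ker]
        constructor
        · intro h
          funext j
          exact h j.1 j.2
        · intro h j hj
          exact congrFun h ⟨j, hj⟩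
      have hNx : N x = Nat.card (LinearMap.ker φ) := by
        rw [Nat.card_eq_fintype_card]
        rw [show N x = ((Finset.univ.filter
          fun v : U a => ∀ j ∈ T, f j (Function.update x a v) = 0).card) from rfl]
        rw [← Fintype.card_subtype]
        exact Fintype.card_congr
          (Equiv.subtypeEquivRight (fun v => (hcond v).trans (hmem v)))
      have h1 : Nat.card (U a) = Nat.card (LinearMap.ker φ) * Nat.card (U a ⧸ LinearMap.ker φ) :=
        Submodule.card_eq_card_quotient_mul_card (LinearMap.ker φ)
      have h2 : Nat.card (U a ⧸ LinearMap.ker φ) ≤ p ^ TR.card := by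
        calc Nat.card (U a ⧸ LinearMap.ker φ)
            = Nat.card (LinearMap.range φ) := Nat.card_congr (φ.quotKerEquivRange).toEquiv
          _ ≤ Nat.card (↥TR → ZMod p) :=
              Nat.card_le_card_of_injective _ Subtype.val_injective
          _ = p ^ TR.card := by
              rw [Nat.card_eq_fintype_card, Fintype.card_fun, ZMod.card, Fintype.card_coe]
      -- now in ℝ
      rw [hNx]
      rw [inv_pow, inv_mul_le_iff₀ (by positivity)]
      have : (Fintype.card (U a) : ℝ) = (Nat.card (U a) : ℝ) := by
        rw [Nat.card_eq_fintype_card]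
      rw [this, h1]
      push_cast
      calc (Nat.card (LinearMap.ker φ) : ℝ) * (Nat.card (U a ⧸ LinearMap.ker φ) : ℝ)
          ≤ (Nat.card (LinearMap.ker φ) : ℝ) * (p ^ TR.card : ℝ) := by
            apply mul_le_mul_of_nonneg_left _ (by positivity)
            exact_mod_cast h2
        _ = (p:ℝ) ^ TR.card * (Nat.card (LinearMap.ker φ) : ℝ) := by ring
    -- assemble
    set WT := (Finset.univ : Finset (∀ i, U i)).filter fun x => ∀ j ∈ T, f j x = 0 with hWT
    set WS := (Finset.univ : Finset (∀ i, U i)).filter fun x => ∀ j ∈ TS, f j x = 0 with hWS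
    have main : (Fintype.card (U a) : ℝ) * (WT.card : ℝ) ≥
        (WS.card : ℝ) * ((p:ℝ)⁻¹ ^ TR.card * (Fintype.card (U a) : ℝ)) := by
      have e1 : (Fintype.card (U a) : ℝ) * (WT.card : ℝ) = ∑ x : ∀ i, U i, (N x : ℝ) := by
        rw [← Nat.cast_sum]
        exact_mod_cast congrArg (Nat.cast : ℕ → ℝ) key.symm
      rw [e1]
      calc ∑ x : ∀ i, U i, (N x : ℝ)
          ≥ ∑ x ∈ WS, (N x : ℝ) := by
            apply Finset.sum_le_sum_of_subset_of_nonneg (Finset.subset_univ _)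
            intro x _ _; positivity
        _ ≥ ∑ _x ∈ WS, ((p:ℝ)⁻¹ ^ TR.card * (Fintype.card (U a) : ℝ)) := by
            apply Finset.sum_le_sum
            intro x hxin
            exact hB x (by simpa [hWS] using (Finset.mem_filter.1 hxin).2)
        _ = (WS.card : ℝ) * ((p:ℝ)⁻¹ ^ TR.card * (Fintype.card (U a) : ℝ)) := by
            rw [Finset.sum_const, nsmul_eq_mul]
    have hca : (0:ℝ) < (Fintype.card (U a) : ℝ) := by
      exact_mod_cast Fintype.card_pos
    have hWSbound : (p:ℝ)⁻¹ ^ TS.card * (Fintype.card (∀ i, U i) : ℝ) ≤ (WS.card : ℝ) := IH'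
    have final : (p:ℝ)⁻¹ ^ T.card * (Fintype.card (∀ i, U i) : ℝ) ≤ (WT.card : ℝ) := by
      have step : ((p:ℝ)⁻¹ ^ TS.card * (Fintype.card (∀ i, U i) : ℝ)) *
          ((p:ℝ)⁻¹ ^ TR.card * (Fintype.card (U a) : ℝ)) ≤
          (Fintype.card (U a) : ℝ) * (WT.card : ℝ) := by
        refine le_trans ?_ main
        apply mul_le_mul_of_nonneg_right hWSbound (by positivity)
      rw [← hcardsplit, pow_add]
      nlinarith [step, hca, pow_pos (inv_pos.2 hp) TR.card, pow_pos (inv_pos.2 hp) TS.card]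
    exact final

/-- A multilinear variety of codimension at most `r` in `U_1 × ⋯ × U_k`
has density at least `p^{-r}`. -/
theorem variety_density (p : ℕ) [Fact p.Prime] (k r : ℕ) (U : Fin k → Type)
    [∀ i, AddCommGroup (U i)] [∀ i, Module (ZMod p) (U i)] [∀ i, Fintype (U i)]
    (W : Set (∀ i, U i)) (hW : IsMLVariety p r W) :
    (p : ℝ)⁻¹ ^ r * (Fintype.card (∀ i, U i) : ℝ) ≤ (W.ncard : ℝ) := by
  classical
  obtain ⟨J, f, hJf, rfl⟩ := hW
  have := variety_aux p J f Finset.univ Finset.univ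
    (fun j _ => ⟨(hJf j).1, Finset.subset_univ _, (hJf j).2⟩)
  rw [Finset.card_univ, Fintype.card_fin] at this
  refine le_trans this ?_
  rw [Set.ncard_eq_toFinset_card']
  apply le_of_eq
  norm_cast
  congr 1
  simp [Set.toFinset_setOf]
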